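/- Let S = (z₁,…,z_L) and S' = (z₁,…,z_{L-1}, z'_L) be datasets in ℝ^d × {-1,1} differing in one point, with all feature vectors bounded in norm by R. Let w and w' minimize F_S(v) = λ‖v‖² + (1/L)∑_{z∈S} max(0, 1 - y⟨v, x⟩) and F_{S'} respectively, with λ > 0. Then ‖w - w'‖ ≤ R/(λL). -/

import Mathlib

lemma hinge_convex (a b t : ℝ) (ht0 : 0 ≤ t) (ht1 : t ≤ 1) :
    max 0 ((1-t)*a + t*b) ≤ (1-t)*max 0 a + t*max 0 b := by
  apply max_le
  · nlinarith [le_max_left 0 a, le_max_left 0 b]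
  · nlinarith [le_max_right 0 a, le_max_right 0 b, le_max_left 0 a, le_max_left 0 b]

lemma hinge_lip (a b : ℝ) : max 0 a - max 0 b ≤ |a - b| := by
  have h1 : a ≤ b + |a - b| := by cases abs_cases (a - b) <;> linarith
  have h2 : max 0 a ≤ max 0 b + |a - b| :=
    max_le (by positivity) (h1.trans (by gcongr; exact le_max_right 0 b))
  linarith

lemma combo_norm {E : Type*} [NormedAddCommGroup E] [InnerProductSpace ℝ E] (a b : E) (t : ℝ) :
    ‖(1-t)•a + t•b‖^2 = (1-t)*‖a‖^2 + t*‖b‖^2 - t*(1-t)*‖a-b‖^2 := by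
  simp only [← real_inner_self_eq_norm_sq]
  simp only [inner_add_left, inner_add_right, inner_sub_left, inner_sub_right,
    real_inner_smul_left, real_inner_smul_right, real_inner_comm a b]
  ring

-- strong convexity step: if w minimizes F(v) = lam‖v‖² + c * Σ hinge, then
-- F(w) + lam(1-t)‖w-u‖² ≤ F(u) for t ∈ (0,1)
lemma strong_min {d n : ℕ} (lam c : ℝ) (hlam : 0 < lam) (hc : 0 ≤ c)
    (T : Fin n → EuclideanSpace ℝ (Fin d) × ℝ)
    (w : EuclideanSpace ℝ (Fin d))
    (hw : ∀ v, lam * ‖w‖ ^ 2 + c * ∑ i, max 0 (1 - (T i).2 * (inner ℝ w (T i).1 : ℝ))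
      ≤ lam * ‖v‖ ^ 2 + c * ∑ i, max 0 (1 - (T i).2 * (inner ℝ v (T i).1 : ℝ)))
    (u : EuclideanSpace ℝ (Fin d)) (t : ℝ) (ht0 : 0 < t) (ht1 : t < 1) :
    lam * ‖w‖ ^ 2 + c * ∑ i, max 0 (1 - (T i).2 * (inner ℝ w (T i).1 : ℝ))
      + lam * (1-t) * ‖w - u‖^2
      ≤ lam * ‖u‖ ^ 2 + c * ∑ i, max 0 (1 - (T i).2 * (inner ℝ u (T i).1 : ℝ)) := by
  set vt : EuclideanSpace ℝ (Fin d) := (1-t)•w + t•u with hvt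
  have hnorm : ‖vt‖^2 = (1-t)*‖w‖^2 + t*‖u‖^2 - t*(1-t)*‖w-u‖^2 := combo_norm w u t
  have hsum : ∑ i, max 0 (1 - (T i).2 * (inner ℝ vt (T i).1 : ℝ))
      ≤ (1-t) * ∑ i, max 0 (1 - (T i).2 * (inner ℝ w (T i).1 : ℝ))
        + t * ∑ i, max 0 (1 - (T i).2 * (inner ℝ u (T i).1 : ℝ)) := by
    rw [Finset.mul_sum, Finset.mul_sum, ← Finset.sum_add_distrib]
    apply Finset.sum_le_sum
    intro i _
    have hin : (inner ℝ vt (T i).1 : ℝ) = (1-t) * inner ℝ w (T i).1 + t * inner ℝ u (T i).1 := by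
      rw [hvt, inner_add_left, real_inner_smul_left, real_inner_smul_left]
    rw [hin]
    have : 1 - (T i).2 * ((1-t) * inner ℝ w (T i).1 + t * inner ℝ u (T i).1)
        = (1-t) * (1 - (T i).2 * inner ℝ w (T i).1) + t * (1 - (T i).2 * inner ℝ u (T i).1) := by ring
    rw [this]
    exact hinge_convex _ _ t ht0.le ht1.le
  have h1 := hw vt
  have h2 : lam * ‖w‖ ^ 2 + c * ∑ i, max 0 (1 - (T i).2 * (inner ℝ w (T i).1 : ℝ))
      ≤ lam * ((1-t)*‖w‖^2 + t*‖u‖^2 - t*(1-t)*‖w-u‖^2)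
        + c * ((1-t) * ∑ i, max 0 (1 - (T i).2 * (inner ℝ w (T i).1 : ℝ))
          + t * ∑ i, max 0 (1 - (T i).2 * (inner ℝ u (T i).1 : ℝ))) := by
    calc _ ≤ lam * ‖vt‖ ^ 2 + c * ∑ i, max 0 (1 - (T i).2 * (inner ℝ vt (T i).1 : ℝ)) := h1
    _ ≤ _ := by rw [hnorm]; gcongr
  -- multiply out: t * (F w + lam(1-t)D²) ≤ t * F u
  have h3 : t * (lam * ‖w‖ ^ 2 + c * ∑ i, max 0 (1 - (T i).2 * (inner ℝ w (T i).1 : ℝ))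
      + lam * (1-t) * ‖w - u‖^2)
      ≤ t * (lam * ‖u‖ ^ 2 + c * ∑ i, max 0 (1 - (T i).2 * (inner ℝ u (T i).1 : ℝ))) := by
    nlinarith [h2]
  exact le_of_mul_le_mul_left h3 ht0

theorem svm_uniform_stability (d L : ℕ) (hL : 0 < L) (lam R : ℝ) (hlam : 0 < lam)
    (S S' : Fin L → EuclideanSpace ℝ (Fin d) × ℝ)
    (hdiff : ∀ i : Fin L, i ≠ (⟨L - 1, by omega⟩ : Fin L) → S i = S' i)
    (hRS : ∀ i, ‖(S i).1‖ ≤ R) (hRS' : ∀ i, ‖(S' i).1‖ ≤ R)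
    (hyS : ∀ i, (S i).2 = 1 ∨ (S i).2 = -1) (hyS' : ∀ i, (S' i).2 = 1 ∨ (S' i).2 = -1)
    (w w' : EuclideanSpace ℝ (Fin d))
    (hw : ∀ v, lam * ‖w‖ ^ 2 + (1 / (L : ℝ)) * ∑ i, max 0 (1 - (S i).2 * (inner ℝ w (S i).1 : ℝ))
      ≤ lam * ‖v‖ ^ 2 + (1 / (L : ℝ)) * ∑ i, max 0 (1 - (S i).2 * (inner ℝ v (S i).1 : ℝ)))
    (hw' : ∀ v, lam * ‖w'‖ ^ 2 + (1 / (L : ℝ)) * ∑ i, max 0 (1 - (S' i).2 * (inner ℝ w' (S' i).1 : ℝ))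
      ≤ lam * ‖v‖ ^ 2 + (1 / (L : ℝ)) * ∑ i, max 0 (1 - (S' i).2 * (inner ℝ v (S' i).1 : ℝ))) :
    ‖w - w'‖ ≤ R / (lam * L) := by
  have hLpos : (0:ℝ) < L := by exact_mod_cast hL
  have hc : (0:ℝ) ≤ 1 / (L:ℝ) := by positivity
  set D := ‖w - w'‖ with hD
  have hDnn : 0 ≤ D := norm_nonneg _
  have hRnn : 0 ≤ R := le_trans (norm_nonneg _) (hRS ⟨0, hL⟩)
  -- the differing-index cancellation bound
  set last : Fin L := ⟨L - 1, by omega⟩ with hlast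
  have hdiffsum :
      ((∑ i, max 0 (1 - (S i).2 * (inner ℝ w' (S i).1 : ℝ)))
        - ∑ i, max 0 (1 - (S i).2 * (inner ℝ w (S i).1 : ℝ)))
      + ((∑ i, max 0 (1 - (S' i).2 * (inner ℝ w (S' i).1 : ℝ)))
        - ∑ i, max 0 (1 - (S' i).2 * (inner ℝ w' (S' i).1 : ℝ))) ≤ 2 * R * D := by
    have heq : ((∑ i, max 0 (1 - (S i).2 * (inner ℝ w' (S i).1 : ℝ)))
        - ∑ i, max 0 (1 - (S i).2 * (inner ℝ w (S i).1 : ℝ)))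
      + ((∑ i, max 0 (1 - (S' i).2 * (inner ℝ w (S' i).1 : ℝ)))
        - ∑ i, max 0 (1 - (S' i).2 * (inner ℝ w' (S' i).1 : ℝ)))
      = ∑ i, ((max 0 (1 - (S i).2 * (inner ℝ w' (S i).1 : ℝ))
          - max 0 (1 - (S i).2 * (inner ℝ w (S i).1 : ℝ)))
        + (max 0 (1 - (S' i).2 * (inner ℝ w (S' i).1 : ℝ))
          - max 0 (1 - (S' i).2 * (inner ℝ w' (S' i).1 : ℝ)))) := by
      rw [Finset.sum_add_distrib, Finset.sum_sub_distrib, Finset.sum_sub_distrib]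
    rw [heq]
    rw [Finset.sum_eq_single last]
    · -- bound the last term
      have lip : ∀ (p : EuclideanSpace ℝ (Fin d) × ℝ) (u v : EuclideanSpace ℝ (Fin d)),
          ‖p.1‖ ≤ R → (p.2 = 1 ∨ p.2 = -1) →
          max 0 (1 - p.2 * (inner ℝ u p.1 : ℝ)) - max 0 (1 - p.2 * (inner ℝ v p.1 : ℝ))
            ≤ R * ‖u - v‖ := by
        intro p u v hpR hpy
        refine (hinge_lip _ _).trans ?_
        have : (1 - p.2 * (inner ℝ u p.1 : ℝ)) - (1 - p.2 * (inner ℝ v p.1 : ℝ))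
            = p.2 * (inner ℝ (v - u) p.1 : ℝ) := by
          rw [inner_sub_left]; ring
        rw [this, abs_mul]
        have hy1 : |p.2| = 1 := by rcases hpy with h | h <;> simp [h]
        rw [hy1, one_mul]
        calc |(inner ℝ (v - u) p.1 : ℝ)| ≤ ‖v - u‖ * ‖p.1‖ := abs_real_inner_le_norm _ _
        _ ≤ ‖v - u‖ * R := by gcongr
        _ = R * ‖u - v‖ := by rw [norm_sub_rev]; ring
      have b1 := lip (S last) w' w (hRS last) (hyS last)
      have b2 := lip (S' last) w w' (hRS' last) (hyS' last)
      have h1 : ‖w' - w‖ = D := by rw [norm_sub_rev]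
      have h2 : ‖w - w'‖ = D := rfl
      rw [h1] at b1; rw [h2] at b2
      linarith
    · intro i _ hi
      rw [hdiff i hi]
      ring
    · intro h; exact absurd (Finset.mem_univ last) h
  -- strong convexity at both minimizers, parameter t
  have key : ∀ t : ℝ, 0 < t → t < 1 → 2 * lam * (1-t) * D^2 ≤ (2 * R / L) * D := by
    intro t ht0 ht1
    have h1 := strong_min lam (1/(L:ℝ)) hlam hc S w hw w' t ht0 ht1
    have h2 := strong_min lam (1/(L:ℝ)) hlam hc S' w' hw' w t ht0 ht1
    have hsym : ‖w' - w‖ = D := by rw [norm_sub_rev]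
    rw [hsym] at h2
    -- add h1 + h2, the lam‖·‖² terms cancel; get
    -- 2lam(1-t)D² ≤ (1/L)*[diff sums] ≤ (1/L)*2RD
    have hmul : (1/(L:ℝ)) * (2 * R * D) = (2*R/L)*D := by field_simp
    nlinarith [mul_le_mul_of_nonneg_left hdiffsum hc]
  -- pass to limit t → 0 : 2 lam D² ≤ (2R/L) D
  have hlim : 2 * lam * D^2 ≤ (2 * R / L) * D := by
    have : ∀ ε > 0, 2 * lam * D^2 ≤ (2 * R / L) * D + ε := by
      intro ε hε
      set t := min (1/2 : ℝ) (ε / (2 * lam * D^2 + 1)) with ht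
      have ht0 : 0 < t := lt_min (by norm_num) (by positivity)
      have ht1 : t < 1 := lt_of_le_of_lt (min_le_left _ _) (by norm_num)
      have hk := key t ht0 ht1
      have htle : t * (2 * lam * D^2) ≤ ε := by
        have h1 : t ≤ ε / (2 * lam * D^2 + 1) := min_le_right _ _
        have h2 : 0 < 2 * lam * D^2 + 1 := by positivity
        calc t * (2 * lam * D^2) ≤ (ε / (2 * lam * D^2 + 1)) * (2 * lam * D^2 + 1) := by
              apply mul_le_mul h1 (by linarith) (by positivity) (by positivity)
        _ = ε := by field_simp
      nlinarith
    exact le_of_forall_pos_le_add this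
  -- conclude
  rcases eq_or_lt_of_le hDnn with h0 | hDpos
  · rw [← h0]; positivity
  · rw [le_div_iff₀ (by positivity)]
    have : D * (2 * lam * D) ≤ D * (2 * R / L) := by nlinarith
    have h4 : 2 * lam * D ≤ 2 * R / L := le_of_mul_le_mul_left (by linarith [this]) hDpos
    have h5 : (2 * R / L) * L = 2 * R := div_mul_cancel₀ _ (ne_of_gt hLpos)
    nlinarith [mul_le_mul_of_nonneg_right h4 hLpos.le]
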